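/- With A, ⋆ and f1, f2, f3, f4 as in the context: an element x ∈ A satisfies x ⋆ x = x if and only if x = Σ_{i ∈ S} fᵢ for some subset S ⊆ {1, 2, 3, 4}. In particular (A, ⋆) has exactly 16 idempotents, and f1, f2, f3, f4 are exactly the minimal (primitive) nonzero idempotents of (A, ⋆), i.e. the nonzero idempotents that cannot be written as a sum of two nonzero ⋆-orthogonal idempotents. -/
import Mathlib


/-- The underlying 4-dimensional complex vector space of the convolution algebra,
with coordinates recording the coefficients of the basis vectors `E`, `P`, `Q`, `I`. -/
abbrev ConvAlg : Type := ℂ × ℂ × ℂ × ℂ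

/-- The basis vector `E` (the cup–cap diagram). -/
def Ev : ConvAlg := (1, 0, 0, 0)

/-- The basis vector `P` (minimal idempotent projecting onto `X₂ ⊠ 1`). -/
def Pv : ConvAlg := (0, 1, 0, 0)

/-- The basis vector `Q` (minimal idempotent projecting onto `1 ⊠ Y₂`). -/
def Qv : ConvAlg := (0, 0, 1, 0)

/-- The basis vector `I` (the identity of `End(X ⊗ X)`). -/
def Iv : ConvAlg := (0, 0, 0, 1)

/-- The convolution (horizontal) product on `End(X ⊗ X)` in the category
`C_{q1,q2}`, written in the basis `E, P, Q, I`: it is the unique `ℂ`-bilinear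
product with `E ⋆ x = x ⋆ E = x`, `I ⋆ I = D·I`, `I ⋆ P = P ⋆ I = (b1/D)·I`,
`I ⋆ Q = Q ⋆ I = (b2/D)·I`, `P ⋆ P = (b1/D²)·E + ((b1−1)/D)·P`,
`Q ⋆ Q = (b2/D²)·E + ((b2−1)/D)·Q`, and
`P ⋆ Q = Q ⋆ P = (1/D)·(I − (1/D)·E − P − Q)`, where `a1 = [2]_{q1}`,
`a2 = [2]_{q2}`, `b1 = [3]_{q1}`, `b2 = [3]_{q2}`, `D = a1·a2`. -/
noncomputable def convMul (q1 q2 : ℂ) (x y : ConvAlg) : ConvAlg :=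
  let b1 : ℂ := q1 ^ 2 + 1 + (q1⁻¹) ^ 2
  let b2 : ℂ := q2 ^ 2 + 1 + (q2⁻¹) ^ 2
  let D : ℂ := (q1 + q1⁻¹) * (q2 + q2⁻¹)
  let xE := x.1; let xP := x.2.1; let xQ := x.2.2.1; let xI := x.2.2.2
  let yE := y.1; let yP := y.2.1; let yQ := y.2.2.1; let yI := y.2.2.2
  ( xE * yE + (b1 / D ^ 2) * (xP * yP) + (b2 / D ^ 2) * (xQ * yQ)
      - (1 / D ^ 2) * (xP * yQ + xQ * yP),
    xE * yP + xP * yE + ((b1 - 1) / D) * (xP * yP) - (1 / D) * (xP * yQ + xQ * yP),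
    xE * yQ + xQ * yE + ((b2 - 1) / D) * (xQ * yQ) - (1 / D) * (xP * yQ + xQ * yP),
    xE * yI + xI * yE + D * (xI * yI) + (b1 / D) * (xP * yI + xI * yP)
      + (b2 / D) * (xQ * yI + xI * yQ) + (1 / D) * (xP * yQ + xQ * yP) )

/-- The four candidate minimal idempotents `f1, f2, f3, f4` of the convolution
algebra, as a function `Fin 4 → ConvAlg`:
`f1 = (1/D)·I`, `f2 = −(1/D)·I + (1/a2²)·E + (a1/a2)·Q`,
`f3 = −(1/D)·I + (1/a1²)·E + (a2/a1)·P`, and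
`f4 = (1/D)·I + (1 − 1/a1² − 1/a2²)·E − (a2/a1)·P − (a1/a2)·Q`. -/
noncomputable def convIdem (q1 q2 : ℂ) : Fin 4 → ConvAlg :=
  let a1 : ℂ := q1 + q1⁻¹
  let a2 : ℂ := q2 + q2⁻¹
  let D : ℂ := a1 * a2
  ![ (1 / D) • Iv,
     (-(1 / D)) • Iv + (1 / a2 ^ 2) • Ev + (a1 / a2) • Qv,
     (-(1 / D)) • Iv + (1 / a1 ^ 2) • Ev + (a2 / a1) • Pv,
     (1 / D) • Iv + (1 - 1 / a1 ^ 2 - 1 / a2 ^ 2) • Ev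
       - (a2 / a1) • Pv - (a1 / a2) • Qv ]


/-- The convolution product written via `a1 = [2]_q1`, `a2 = [2]_q2` only. -/
noncomputable def convMul' (a1 a2 : ℂ) (x y : ConvAlg) : ConvAlg :=
  let b1 : ℂ := a1 ^ 2 - 1
  let b2 : ℂ := a2 ^ 2 - 1
  let D : ℂ := a1 * a2
  let xE := x.1; let xP := x.2.1; let xQ := x.2.2.1; let xI := x.2.2.2
  let yE := y.1; let yP := y.2.1; let yQ := y.2.2.1; let yI := y.2.2.2
  ( xE * yE + (b1 / D ^ 2) * (xP * yP) + (b2 / D ^ 2) * (xQ * yQ)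
      - (1 / D ^ 2) * (xP * yQ + xQ * yP),
    xE * yP + xP * yE + ((b1 - 1) / D) * (xP * yP) - (1 / D) * (xP * yQ + xQ * yP),
    xE * yQ + xQ * yE + ((b2 - 1) / D) * (xQ * yQ) - (1 / D) * (xP * yQ + xQ * yP),
    xE * yI + xI * yE + D * (xI * yI) + (b1 / D) * (xP * yI + xI * yP)
      + (b2 / D) * (xQ * yI + xI * yQ) + (1 / D) * (xP * yQ + xQ * yP) )

/-- `convIdem` written via `a1, a2` only. -/
noncomputable def convIdem' (a1 a2 : ℂ) : Fin 4 → ConvAlg :=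
  let D : ℂ := a1 * a2
  ![ (1 / D) • Iv,
     (-(1 / D)) • Iv + (1 / a2 ^ 2) • Ev + (a1 / a2) • Qv,
     (-(1 / D)) • Iv + (1 / a1 ^ 2) • Ev + (a2 / a1) • Pv,
     (1 / D) • Iv + (1 - 1 / a1 ^ 2 - 1 / a2 ^ 2) • Ev
       - (a2 / a1) • Pv - (a1 / a2) • Qv ]

theorem convIdem_eq (q1 q2 : ℂ) :
    convIdem q1 q2 = convIdem' (q1 + q1⁻¹) (q2 + q2⁻¹) := rfl

theorem convMul_eq (q1 q2 : ℂ) (h1 : q1 ≠ 0) (h2 : q2 ≠ 0) :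
    convMul q1 q2 = convMul' (q1 + q1⁻¹) (q2 + q2⁻¹) := by
  have iq1 : q1 * q1⁻¹ = 1 := mul_inv_cancel₀ h1
  have iq2 : q2 * q2⁻¹ = 1 := mul_inv_cancel₀ h2
  have hb1 : q1 ^ 2 + 1 + (q1⁻¹) ^ 2 = (q1 + q1⁻¹) ^ 2 - 1 := by
    linear_combination (-2 : ℂ) * iq1
  have hb2 : q2 ^ 2 + 1 + (q2⁻¹) ^ 2 = (q2 + q2⁻¹) ^ 2 - 1 := by
    linear_combination (-2 : ℂ) * iq2
  funext x y
  simp only [convMul, convMul', hb1, hb2]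

/-- The characters of the convolution algebra, in terms of `a1, a2`. -/
noncomputable def chi (a1 a2 : ℂ) (x : ConvAlg) : Fin 4 → ℂ :=
  let D : ℂ := a1 * a2
  let b1 : ℂ := a1 ^ 2 - 1
  let b2 : ℂ := a2 ^ 2 - 1
  ![ x.1 + b1 / D * x.2.1 + b2 / D * x.2.2.1 + D * x.2.2.2,
     x.1 - x.2.1 / D + b2 / D * x.2.2.1,
     x.1 + b1 / D * x.2.1 - x.2.2.1 / D,
     x.1 - x.2.1 / D - x.2.2.1 / D ]

/-- The inverse of `chi`. -/
noncomputable def psi (a1 a2 : ℂ) (c : Fin 4 → ℂ) : ConvAlg :=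
  let D : ℂ := a1 * a2
  ( c 1 / a2 ^ 2 + c 2 / a1 ^ 2 + c 3 * (1 - 1 / a1 ^ 2 - 1 / a2 ^ 2),
    (c 2 - c 3) * a2 / a1,
    (c 1 - c 3) * a1 / a2,
    (c 0 - c 1 - c 2 + c 3) / D )

/-- Standard basis idempotents of `Fin 4 → ℂ`. -/
def eIdem (i : Fin 4) : Fin 4 → ℂ := fun j => if j = i then 1 else 0

section
variable {a1 a2 : ℂ}

set_option maxHeartbeats 1000000 in
theorem psi_chi (ha1 : a1 ≠ 0) (ha2 : a2 ≠ 0) (x : ConvAlg) :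
    psi a1 a2 (chi a1 a2 x) = x := by
  have i1 : a1 * a1⁻¹ = 1 := mul_inv_cancel₀ ha1
  have i2 : a2 * a2⁻¹ = 1 := mul_inv_cancel₀ ha2
  obtain ⟨xE, xP, xQ, xI⟩ := x
  simp only [psi, chi, Matrix.cons_val_zero, Matrix.cons_val_one, Matrix.head_cons,
    Matrix.cons_val_two, Matrix.tail_cons, Matrix.cons_val_three, Prod.mk.injEq]
  refine ⟨?_, ?_, ?_, ?_⟩
  · linear_combination (a1⁻¹ * a2⁻¹ * xP + a1 * a1⁻¹ ^ 2 * a2⁻¹ * xP) * i1 +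
      (a1⁻¹ * a2⁻¹ * xQ + a1⁻¹ * a2 * a2⁻¹ ^ 2 * xQ) * i2
  · linear_combination (a2 * a2⁻¹ * xP + a1 * a1⁻¹ * a2 * a2⁻¹ * xP) * i1 + (xP) * i2
  · linear_combination (a2 ^ 2 * a2⁻¹ ^ 2 * xQ) * i1 + (xQ + a2 * a2⁻¹ * xQ) * i2
  · linear_combination (a2 * a2⁻¹ * xI) * i1 + (xI) * i2

set_option maxHeartbeats 1000000 in
theorem chi_mul (ha1 : a1 ≠ 0) (ha2 : a2 ≠ 0) (x y : ConvAlg) :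
    chi a1 a2 (convMul' a1 a2 x y) = chi a1 a2 x * chi a1 a2 y := by
  have i1 : a1 * a1⁻¹ = 1 := mul_inv_cancel₀ ha1
  have i2 : a2 * a2⁻¹ = 1 := mul_inv_cancel₀ ha2
  obtain ⟨xE, xP, xQ, xI⟩ := x
  obtain ⟨yE, yP, yQ, yI⟩ := y
  funext j
  fin_cases j
  · simp [chi, convMul', Pi.mul_apply]
    linear_combination
        (a2 * a2⁻¹ * xQ * yP + a2 * a2⁻¹ * xP * yQ + (-1:ℂ) * a2 ^ 2 * a2⁻¹ ^ 2 * xQ * yP +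
          (-1:ℂ) * a2 ^ 2 * a2⁻¹ ^ 2 * xP * yQ + (-1:ℂ) * a1 * a1⁻¹ * a2 ^ 2 * a2⁻¹ ^ 2 * xQ * yP +
          (-1:ℂ) * a1 * a1⁻¹ * a2 ^ 2 * a2⁻¹ ^ 2 * xP * yQ) * i1 +
        ((-1:ℂ) * a2 * a2⁻¹ * xQ * yP + (-1:ℂ) * a2 * a2⁻¹ * xP * yQ) * i2
  · simp [chi, convMul', Pi.mul_apply]
    ring
  · simp [chi, convMul', Pi.mul_apply]
    ring
  · simp [chi, convMul', Pi.mul_apply]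
    ring

set_option maxHeartbeats 1000000 in
theorem chi_f (ha1 : a1 ≠ 0) (ha2 : a2 ≠ 0) (i : Fin 4) :
    chi a1 a2 (convIdem' a1 a2 i) = eIdem i := by
  have i1 : a1 * a1⁻¹ = 1 := mul_inv_cancel₀ ha1
  have i2 : a2 * a2⁻¹ = 1 := mul_inv_cancel₀ ha2
  fin_cases i <;> funext j <;> fin_cases j <;>
    simp [chi, convIdem', eIdem, Ev, Pv, Qv, Iv] <;>
    first
      | ring1
      | linear_combination (a2 * a2⁻¹) * i1 + ((1:ℂ)) * i2
      | linear_combination ((-1:ℂ) * a2⁻¹ ^ 2 + (-1:ℂ) * a2 * a2⁻¹ + a2 ^ 2 * a2⁻¹ ^ 2) * i1 + (a2 * a2⁻¹) * i2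
      | linear_combination ((-1:ℂ) * a2⁻¹ ^ 2 + a2 ^ 2 * a2⁻¹ ^ 2) * i1 + ((1:ℂ) + a2 * a2⁻¹) * i2
      | linear_combination ((-1:ℂ) * a2⁻¹ ^ 2) * i1
      | linear_combination (a1 * a1⁻¹ * a2 * a2⁻¹) * i1 + ((-1:ℂ) * a1⁻¹ ^ 2) * i2
      | linear_combination ((-1:ℂ) * a1⁻¹ ^ 2) * i2
      | linear_combination (a2 * a2⁻¹ + a1 * a1⁻¹ * a2 * a2⁻¹) * i1 + ((1:ℂ) + (-1:ℂ) * a1⁻¹ ^ 2) * i2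
      | linear_combination (a2⁻¹ ^ 2 + (-1:ℂ) * a2 ^ 2 * a2⁻¹ ^ 2 + (-1:ℂ) * a1 * a1⁻¹ * a2 * a2⁻¹) * i1 + ((-1:ℂ) + (-1:ℂ) * a2 * a2⁻¹ + a1⁻¹ ^ 2) * i2
      | linear_combination (a2⁻¹ ^ 2 + (-1:ℂ) * a2 ^ 2 * a2⁻¹ ^ 2) * i1 + ((-1:ℂ) + (-1:ℂ) * a2 * a2⁻¹ + a1⁻¹ ^ 2) * i2
      | linear_combination (a2⁻¹ ^ 2 + (-1:ℂ) * a2 * a2⁻¹ + (-1:ℂ) * a1 * a1⁻¹ * a2 * a2⁻¹) * i1 + ((-1:ℂ) + a1⁻¹ ^ 2) * i2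
      | linear_combination (a2⁻¹ ^ 2) * i1 + (a1⁻¹ ^ 2) * i2

/-- `chi` as an additive monoid homomorphism. -/
noncomputable def chiHom (a1 a2 : ℂ) : ConvAlg →+ (Fin 4 → ℂ) where
  toFun := chi a1 a2
  map_zero' := by
    funext j
    fin_cases j <;> simp [chi]
  map_add' x y := by
    obtain ⟨xE, xP, xQ, xI⟩ := x
    obtain ⟨yE, yP, yQ, yI⟩ := y
    funext j
    fin_cases j <;> simp [chi, Prod.mk_add_mk] <;> ring

theorem chi_zero : chi a1 a2 0 = 0 := (chiHom a1 a2).map_zero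

theorem chi_injective (ha1 : a1 ≠ 0) (ha2 : a2 ≠ 0) :
    Function.Injective (chi a1 a2) := fun x y h => by
  have := congrArg (psi a1 a2) h
  rwa [psi_chi ha1 ha2, psi_chi ha1 ha2] at this

theorem sum_eIdem (S : Finset (Fin 4)) :
    (∑ i ∈ S, eIdem i) = fun j => if j ∈ S then (1 : ℂ) else 0 := by
  funext j
  rw [Finset.sum_apply]
  simp only [eIdem]
  rw [Finset.sum_ite_eq]

end

/-- An element `x` satisfies `x ⋆ x = x` iff `x` is the sum of the `fᵢ` over some
subset `S ⊆ {1,2,3,4}`; in particular `(A, ⋆)` has exactly `16` idempotents, and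
`f1, f2, f3, f4` are exactly the minimal (primitive) nonzero idempotents, i.e. the
nonzero idempotents that are not a sum of two nonzero `⋆`-orthogonal idempotents. -/
theorem convAlg_idempotents_classification (q1 q2 : ℂ) (h1 : q1 ≠ 0) (h2 : q2 ≠ 0)
    (ha1 : q1 + q1⁻¹ ≠ 0) (ha2 : q2 + q2⁻¹ ≠ 0) :
    (∀ x : ConvAlg, convMul q1 q2 x x = x ↔
      ∃ S : Finset (Fin 4), x = ∑ i ∈ S, convIdem q1 q2 i) ∧
    {x : ConvAlg | convMul q1 q2 x x = x}.ncard = 16 ∧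
    (∀ x : ConvAlg,
      (convMul q1 q2 x x = x ∧ x ≠ 0 ∧
        ¬∃ y z : ConvAlg, convMul q1 q2 y y = y ∧ convMul q1 q2 z z = z ∧
          y ≠ 0 ∧ z ≠ 0 ∧ convMul q1 q2 y z = 0 ∧ convMul q1 q2 z y = 0 ∧
          x = y + z) ↔
      ∃ i : Fin 4, x = convIdem q1 q2 i) := by
  classical
  have hM : convMul q1 q2 = convMul' (q1 + q1⁻¹) (q2 + q2⁻¹) := convMul_eq q1 q2 h1 h2
  have hF : convIdem q1 q2 = convIdem' (q1 + q1⁻¹) (q2 + q2⁻¹) := convIdem_eq q1 q2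
  set χ := chi (q1 + q1⁻¹) (q2 + q2⁻¹) with hχdef
  have hinj : Function.Injective χ := chi_injective ha1 ha2
  have hmulχ : ∀ x y, χ (convMul q1 q2 x y) = χ x * χ y := by
    intro x y; rw [hM]; exact chi_mul ha1 ha2 x y
  have hχf : ∀ i, χ (convIdem q1 q2 i) = eIdem i := by
    intro i; rw [hF]; exact chi_f ha1 ha2 i
  have hχ0 : χ 0 = 0 := chi_zero
  have hχadd : ∀ x y, χ (x + y) = χ x + χ y := fun x y =>
    (chiHom (q1 + q1⁻¹) (q2 + q2⁻¹)).map_add x y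
  have hχsum : ∀ S : Finset (Fin 4),
      χ (∑ i ∈ S, convIdem q1 q2 i) = fun j => if j ∈ S then (1 : ℂ) else 0 := by
    intro S
    have hs : χ (∑ i ∈ S, convIdem q1 q2 i) = ∑ i ∈ S, χ (convIdem q1 q2 i) :=
      map_sum (chiHom (q1 + q1⁻¹) (q2 + q2⁻¹)) _ S
    rw [hs, Finset.sum_congr rfl (fun i _ => hχf i), sum_eIdem]
  have hidem : ∀ x : ConvAlg, convMul q1 q2 x x = x ↔ χ x * χ x = χ x := by
    intro x
    constructor
    · intro h; rw [← hmulχ, h]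
    · intro h; exact hinj (by rw [hmulχ]; exact h)
  have hbool : ∀ c : Fin 4 → ℂ, c * c = c ↔ ∀ j, c j = 0 ∨ c j = 1 := by
    intro c
    constructor
    · intro h j
      have h' : c j * c j = c j := congrFun h j
      have h'' : c j * (c j - 1) = 0 := by linear_combination h'
      rcases mul_eq_zero.1 h'' with h0 | h0
      · exact Or.inl h0
      · exact Or.inr (sub_eq_zero.mp h0)
    · intro h
      funext j
      rcases h j with h0 | h0 <;> simp [Pi.mul_apply, h0]
  have part1 : ∀ x : ConvAlg, convMul q1 q2 x x = x ↔
      ∃ S : Finset (Fin 4), x = ∑ i ∈ S, convIdem q1 q2 i := by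
    intro x
    rw [hidem, hbool]
    constructor
    · intro h
      refine ⟨Finset.univ.filter (fun j => χ x j = 1), hinj ?_⟩
      rw [hχsum]
      funext j
      simp only [Finset.mem_filter, Finset.mem_univ, true_and]
      rcases h j with h0 | h0 <;> rw [h0] <;> simp
    · rintro ⟨S, rfl⟩ j
      rw [congrFun (hχsum S) j]
      split_ifs <;> simp
  have hTinj : Function.Injective (fun S : Finset (Fin 4) => ∑ i ∈ S, convIdem q1 q2 i) := by
    intro S S' h
    have h2' := congrArg χ h
    rw [hχsum, hχsum] at h2'
    ext j
    have h3 := congrFun h2' j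
    by_cases hj : j ∈ S <;> by_cases hj' : j ∈ S' <;> simp [hj, hj'] at h3 ⊢
  have hfne : ∀ i, convIdem q1 q2 i ≠ 0 := by
    intro i h
    have hh : eIdem i = 0 := by rw [← hχf i, h]; exact hχ0
    have := congrFun hh i
    simp [eIdem] at this
  refine ⟨part1, ?_, ?_⟩
  · have hset : {x : ConvAlg | convMul q1 q2 x x = x} =
        Set.range (fun S : Finset (Fin 4) => ∑ i ∈ S, convIdem q1 q2 i) := by
      ext x
      simp only [Set.mem_setOf_eq, Set.mem_range, part1 x]
      exact ⟨fun ⟨S, hS⟩ => ⟨S, hS.symm⟩, fun ⟨S, hS⟩ => ⟨S, hS.symm⟩⟩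
    rw [hset, ← Set.image_univ, Set.ncard_image_of_injective _ hTinj, Set.ncard_univ,
      Nat.card_eq_fintype_card, Fintype.card_finset, Fintype.card_fin]
    norm_num
  · intro x
    constructor
    · rintro ⟨hx, hx0, hnd⟩
      obtain ⟨S, rfl⟩ := (part1 _).1 hx
      have hSne : S.Nonempty := by
        rcases S.eq_empty_or_nonempty with rfl | h
        · simp at hx0
        · exact h
      obtain ⟨i, hi⟩ := hSne
      by_cases hS1 : S = {i}
      · exact ⟨i, by rw [hS1, Finset.sum_singleton]⟩
      · exfalso
        apply hnd
        have herase : (S.erase i).Nonempty := by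
          rcases Finset.eq_empty_or_nonempty (S.erase i) with he | h
          · rcases (Finset.erase_eq_empty_iff S i).mp he with rfl | rfl
            · simp at hi
            · exact absurd rfl hS1
          · exact h
        refine ⟨convIdem q1 q2 i, ∑ j ∈ S.erase i, convIdem q1 q2 j, ?_, ?_, hfne i, ?_, ?_, ?_, ?_⟩
        · exact (part1 _).2 ⟨{i}, by rw [Finset.sum_singleton]⟩
        · exact (part1 _).2 ⟨S.erase i, rfl⟩
        · intro h0
          obtain ⟨j, hj⟩ := herase
          have hh : χ (∑ k ∈ S.erase i, convIdem q1 q2 k) = 0 := by rw [h0]; exact hχ0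
          rw [hχsum] at hh
          have := congrFun hh j
          simp [hj] at this
        · apply hinj
          rw [hmulχ, hχ0, hχf, hχsum]
          funext j
          simp only [Pi.mul_apply, Pi.zero_apply, eIdem]
          by_cases hji : j = i
          · subst hji; simp [Finset.mem_erase]
          · simp [hji]
        · apply hinj
          rw [hmulχ, hχ0, hχf, hχsum]
          funext j
          simp only [Pi.mul_apply, Pi.zero_apply, eIdem]
          by_cases hji : j = i
          · subst hji; simp [Finset.mem_erase]
          · simp [hji]
        · exact (Finset.add_sum_erase S _ hi).symm
    · rintro ⟨i, rfl⟩
      refine ⟨(part1 _).2 ⟨{i}, by rw [Finset.sum_singleton]⟩, hfne i, ?_⟩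
      rintro ⟨y, z, hy, hz, hy0, hz0, hyz, hzy, hsum⟩
      have hcy := (hbool _).1 ((hidem y).1 hy)
      have hcz := (hbool _).1 ((hidem z).1 hz)
      have horth : χ y * χ z = 0 := by rw [← hmulχ, hyz, hχ0]
      have hsumχ : χ y + χ z = eIdem i := by
        rw [← hχadd, ← hsum, hχf]
      have key : χ y = 0 ∨ χ z = 0 := by
        by_cases hyi : χ y i = 0
        · left
          funext j
          show χ y j = 0
          by_cases hji : j = i
          · subst hji; exact hyi
          · have hs := congrFun hsumχ j
            simp only [Pi.add_apply, eIdem, hji, if_false] at hs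
            rcases hcy j with h0 | h0
            · exact h0
            · exfalso
              rcases hcz j with h1 | h1 <;> rw [h0, h1] at hs <;> norm_num at hs
        · right
          have hyi1 : χ y i = 1 := (hcy i).resolve_left hyi
          funext j
          show χ z j = 0
          by_cases hji : j = i
          · subst hji
            have hpr := congrFun horth j
            rw [Pi.mul_apply, hyi1, one_mul] at hpr
            exact hpr
          · have hs := congrFun hsumχ j
            simp only [Pi.add_apply, eIdem, hji, if_false] at hs
            rcases hcz j with h0 | h0
            · exact h0
            · exfalso
              rcases hcy j with h1 | h1 <;> rw [h0, h1] at hs <;> norm_num at hs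
      rcases key with h0 | h0
      · exact hy0 (hinj (by rw [h0, hχ0]))
      · exact hz0 (hinj (by rw [h0, hχ0]))
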